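/- The candidate grid contains a (1+ε)-approximate median: let T be a set of n point sequences in ℝ^d (with the Euclidean metric), each of complexity at most m, let p ∈ [1,∞), ε > 0, and 2 ≤ ℓ ≤ m. Let c be a point sequence attaining min over (ℝ^d)^{≤ℓ} of cost_p^1(T,·), let r* > 0 satisfy n·r* ≤ cost_p^1(T,c) ≤ 2n·r*, and set γ* = ε·r*/((2m)^{1/p}·√d). If τ_i ∈ T satisfies dtw_p(τ_i, c) ≤ (2/n)·cost_p^1(T,c), and ℬ(τ_i, 4r*) denotes the union over the vertices τ_{i,j} of τ_i of the Euclidean balls B(τ_{i,j}, 4r*), then there exists a point sequence c' of complexity at most ℓ all of whose vertices lie in 𝔾(ℬ(τ_i,4r*), γ*) such that cost_p^1(T,c') ≤ (1+ε)·cost_p^1(T,c). -/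

import Mathlib

open scoped BigOperators

/-- An `(m₁, m₂)`-warping (with 0-based indices): a sequence of index pairs starting at
`(0,0)`, ending at `(m₁-1, m₂-1)`, whose consecutive increments lie in
`{(0,1), (1,0), (1,1)}`. -/
def IsWarping (m₁ m₂ : ℕ) (W : List (ℕ × ℕ)) : Prop :=
  W ≠ [] ∧ W.head? = some (0, 0) ∧ W.getLast? = some (m₁ - 1, m₂ - 1) ∧
    ∀ k, k + 1 < W.length →
      W.getD (k + 1) (0, 0) = ((W.getD k (0, 0)).1, (W.getD k (0, 0)).2 + 1) ∨
      W.getD (k + 1) (0, 0) = ((W.getD k (0, 0)).1 + 1, (W.getD k (0, 0)).2) ∨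
      W.getD (k + 1) (0, 0) = ((W.getD k (0, 0)).1 + 1, (W.getD k (0, 0)).2 + 1)

/-- The cost `Σ_{(i,j) ∈ W} ρ(σ_i, τ_j)^p` of a warping `W`. -/
noncomputable def warpCost {X : Type*} [MetricSpace X] [Inhabited X]
    (p : ℝ) (σ τ : List X) (W : List (ℕ × ℕ)) : ℝ :=
  (W.map fun ij => dist (σ.getD ij.1 default) (τ.getD ij.2 default) ^ p).sum

/-- The `p`-dynamic time warping distance between two point sequences. -/
noncomputable def dtw {X : Type*} [MetricSpace X] [Inhabited X] (p : ℝ) (σ τ : List X) : ℝ :=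
  sInf { c : ℝ | ∃ W, IsWarping σ.length τ.length W ∧ c = warpCost p σ τ W ^ (1 / p) }

/-- `cost_p^q(T, c) = Σ_{τ ∈ T} dtw_p(c, τ)^q`. -/
noncomputable def dtwCost {X : Type*} [MetricSpace X] [Inhabited X]
    (p q : ℝ) (T : Finset (List X)) (c : List X) : ℝ :=
  ∑ τ ∈ T, dtw p c τ ^ q

/-- `σ` is a point sequence of complexity at most `ℓ`, i.e. `σ ∈ X^{≤ℓ}`. -/
def SeqLE {X : Type*} (ℓ : ℕ) (σ : List X) : Prop := 2 ≤ σ.length ∧ σ.length ≤ ℓ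

/-- The `γ`-grid-point of `x ∈ ℝ^d`. -/
noncomputable def gridPt (d : ℕ) (γ : ℝ) (x : EuclideanSpace ℝ (Fin d)) :
    EuclideanSpace ℝ (Fin d) :=
  WithLp.toLp 2 (fun i => (⌊x i / γ⌋ : ℝ) * γ)

/-- The grid of cell width `γ` covering `P ⊆ ℝ^d`. -/
noncomputable def gridOf (d : ℕ) (P : Set (EuclideanSpace ℝ (Fin d))) (γ : ℝ) :
    Set (EuclideanSpace ℝ (Fin d)) :=
  gridPt d γ '' P


namespace Warp

variable {m₁ m₂ : ℕ} {W : List (ℕ × ℕ)}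

lemma length_pos (hW : IsWarping m₁ m₂ W) : 0 < W.length :=
  List.length_pos_iff.mpr hW.1

lemma getD_zero (hW : IsWarping m₁ m₂ W) : W.getD 0 (0, 0) = (0, 0) := by
  obtain ⟨h1, h2, -, -⟩ := hW
  cases W with
  | nil => exact absurd rfl h1
  | cons a l => simpa using h2

lemma getD_last (hW : IsWarping m₁ m₂ W) :
    W.getD (W.length - 1) (0, 0) = (m₁ - 1, m₂ - 1) := by
  have hpos := length_pos hW
  have h3 := hW.2.2.1
  rw [List.getLast?_eq_getLast hW.1, List.getLast_eq_getElem] at h3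
  rw [List.getD_eq_getElem _ _ (by omega)]
  simpa using h3

lemma step_fst (hW : IsWarping m₁ m₂ W) {k : ℕ} (hk : k + 1 < W.length) :
    (W.getD k (0,0)).1 ≤ (W.getD (k+1) (0,0)).1 ∧
    (W.getD k (0,0)).2 ≤ (W.getD (k+1) (0,0)).2 ∧
    (W.getD k (0,0)).1 + (W.getD k (0,0)).2 + 1 ≤
      (W.getD (k+1) (0,0)).1 + (W.getD (k+1) (0,0)).2 := by
  rcases hW.2.2.2 k hk with h | h | h <;> rw [h] <;> simp <;> omega

lemma le_sum (hW : IsWarping m₁ m₂ W) :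
    ∀ k, k < W.length → k ≤ (W.getD k (0,0)).1 + (W.getD k (0,0)).2 := by
  intro k
  induction k with
  | zero => intro _; omega
  | succ k ih =>
    intro hk
    have h1 := ih (by omega)
    have h2 := (step_fst hW hk).2.2
    omega

lemma length_le (hW : IsWarping m₁ m₂ W) (h₁ : 1 ≤ m₁) (h₂ : 1 ≤ m₂) :
    W.length ≤ m₁ + m₂ - 1 := by
  have hpos := length_pos hW
  have h := le_sum hW (W.length - 1) (by omega)
  rw [getD_last hW] at h
  simp at h
  omega

lemma fst_mono (hW : IsWarping m₁ m₂ W) :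
    ∀ j k, k + j < W.length → (W.getD k (0,0)).1 ≤ (W.getD (k + j) (0,0)).1 := by
  intro j
  induction j with
  | zero => intro k _; simp
  | succ j ih =>
    intro k hk
    have h1 := ih k (by omega)
    have h2 := (step_fst hW (k := k + j) (by omega)).1
    calc (W.getD k (0,0)).1 ≤ (W.getD (k + j) (0,0)).1 := h1
      _ ≤ (W.getD (k + j + 1) (0,0)).1 := h2
      _ = (W.getD (k + (j+1)) (0,0)).1 := by ring_nf

lemma fst_le (hW : IsWarping m₁ m₂ W) {k : ℕ} (hk : k < W.length) :
    (W.getD k (0,0)).1 ≤ m₁ - 1 := by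
  have hpos := length_pos hW
  have h := fst_mono hW (W.length - 1 - k) k (by omega)
  rw [show k + (W.length - 1 - k) = W.length - 1 by omega, getD_last hW] at h
  simpa using h

lemma step_snd (hW : IsWarping m₁ m₂ W) {k : ℕ} (hk : k + 1 < W.length) :
    (W.getD (k+1) (0,0)).2 = (W.getD k (0,0)).2 ∨
    (W.getD (k+1) (0,0)).2 = (W.getD k (0,0)).2 + 1 := by
  rcases hW.2.2.2 k hk with h | h | h
  · right; rw [h]
  · left; rw [h]
  · right; rw [h]

lemma snd_surj (hW : IsWarping m₁ m₂ W) :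
    ∀ k, k < W.length → ∀ j, j ≤ (W.getD k (0,0)).2 →
      ∃ k' ≤ k, (W.getD k' (0,0)).2 = j := by
  intro k
  induction k with
  | zero =>
    intro _ j hj
    rw [getD_zero hW] at hj
    simp at hj
    exact ⟨0, le_refl 0, by rw [getD_zero hW, hj]⟩
  | succ k ih =>
    intro hk j hj
    rcases step_snd hW hk with h | h
    · rw [h] at hj
      obtain ⟨k', hk', hk''⟩ := ih (by omega) j hj
      exact ⟨k', by omega, hk''⟩
    · rw [h] at hj
      rcases Nat.lt_or_ge j ((W.getD k (0,0)).2 + 1) with h' | h'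
      · obtain ⟨k', hk', hk''⟩ := ih (by omega) j (by omega)
        exact ⟨k', by omega, hk''⟩
      · exact ⟨k + 1, le_refl _, by rw [h]; omega⟩

/-- For every second index `j < m₂` there is a warping pair `(i, j)` with `i ≤ m₁ - 1`. -/
lemma exists_pair (hW : IsWarping m₁ m₂ W) {j : ℕ} (hj : j < m₂) :
    ∃ k < W.length, (W.getD k (0,0)).2 = j ∧ (W.getD k (0,0)).1 ≤ m₁ - 1 := by
  have hpos := length_pos hW
  have hlast := getD_last hW
  obtain ⟨k', hk', hk''⟩ := snd_surj hW (W.length - 1) (by omega) j (by rw [hlast]; simp; omega)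
  exact ⟨k', by omega, hk'', fst_le hW (by omega)⟩

/-- The standard "right then down" warping. -/
def std (m₁ m₂ : ℕ) : List (ℕ × ℕ) :=
  (List.range (m₁ + m₂ - 1)).map (fun k => (min k (m₁ - 1), k - min k (m₁ - 1)))

lemma std_getElem {m₁ m₂ k : ℕ} (hk : k < (std m₁ m₂).length) :
    (std m₁ m₂)[k] = (min k (m₁ - 1), k - min k (m₁ - 1)) := by
  simp [std] at hk ⊢

lemma std_getD {m₁ m₂ k : ℕ} (hk : k < m₁ + m₂ - 1) :
    (std m₁ m₂).getD k (0,0) = (min k (m₁ - 1), k - min k (m₁ - 1)) := by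
  rw [List.getD_eq_getElem _ _ (by simpa [std] using hk), std_getElem]

lemma isWarping_std (h₁ : 1 ≤ m₁) (h₂ : 1 ≤ m₂) : IsWarping m₁ m₂ (std m₁ m₂) := by
  have hlen : (std m₁ m₂).length = m₁ + m₂ - 1 := by simp [std]
  have hne : std m₁ m₂ ≠ [] := by
    intro h
    rw [h] at hlen
    simp at hlen
    omega
  refine ⟨hne, ?_, ?_, ?_⟩
  · rw [List.head?_eq_head hne, List.head_eq_getElem, std_getElem]
    simp
  · rw [List.getLast?_eq_getLast hne, List.getLast_eq_getElem, std_getElem]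
    simp only [hlen, Option.some.injEq, Prod.mk.injEq]
    omega
  · intro k hk
    rw [hlen] at hk
    rw [std_getD (by omega), std_getD (by omega)]
    rcases Nat.lt_or_ge (k + 1) m₁ with h | h
    · right; left; simp [Prod.ext_iff]; omega
    · left; simp [Prod.ext_iff]; omega

end Warp

section DTW

variable {X : Type*} [MetricSpace X] [Inhabited X]

lemma warpCost_eq_sum (p : ℝ) (σ τ : List X) (W : List (ℕ × ℕ)) :
    warpCost p σ τ W =
      ∑ k : Fin W.length, dist (σ.getD (W.get k).1 default) (τ.getD (W.get k).2 default) ^ p := by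
  rw [warpCost]
  conv_lhs => rw [← List.ofFn_get W]
  rw [List.map_ofFn, List.sum_ofFn]
  simp

lemma warpCost_nonneg (p : ℝ) (σ τ : List X) (W : List (ℕ × ℕ)) :
    0 ≤ warpCost p σ τ W :=
  List.sum_nonneg (by
    intro x hx
    obtain ⟨ij, -, rfl⟩ := List.mem_map.mp hx
    exact Real.rpow_nonneg dist_nonneg p)

lemma dtwSet_bddBelow (p : ℝ) (σ τ : List X) :
    BddBelow { c : ℝ | ∃ W, IsWarping σ.length τ.length W ∧ c = warpCost p σ τ W ^ (1 / p) } :=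
  ⟨0, by
    rintro c ⟨W, -, rfl⟩
    exact Real.rpow_nonneg (warpCost_nonneg p σ τ W) _⟩

lemma dtwSet_nonempty (p : ℝ) (σ τ : List X) (h1 : 1 ≤ σ.length) (h2 : 1 ≤ τ.length) :
    { c : ℝ | ∃ W, IsWarping σ.length τ.length W ∧ c = warpCost p σ τ W ^ (1 / p) }.Nonempty :=
  ⟨_, Warp.std σ.length τ.length, Warp.isWarping_std h1 h2, rfl⟩

/-- If an index pair `(i, j)` appears in the warping, the warp cost dominates `dist(σ_i, τ_j)^p`. -/
lemma single_le_warpCost (p : ℝ) (σ τ : List X) {W : List (ℕ × ℕ)} {k : ℕ}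
    (hk : k < W.length) :
    dist (σ.getD (W.getD k (0,0)).1 default) (τ.getD (W.getD k (0,0)).2 default) ^ p ≤
      warpCost p σ τ W := by
  apply List.single_le_sum
  · intro x hx
    obtain ⟨ij, -, rfl⟩ := List.mem_map.mp hx
    exact Real.rpow_nonneg dist_nonneg p
  · exact List.mem_map_of_mem (by rw [List.getD_eq_getElem _ _ hk]; exact List.getElem_mem _)

/-- Every vertex `τ_j` is within `R` of some vertex of `σ`, provided `dtw p σ τ ≤ R`. -/
lemma exists_vertex_close (p : ℝ) (hp : 1 ≤ p) (σ τ : List X)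
    (h1 : 1 ≤ σ.length) {j : ℕ} (hj : j < τ.length) {R : ℝ}
    (hR : dtw p σ τ ≤ R) :
    ∃ i < σ.length, dist (σ.getD i default) (τ.getD j default) ≤ R := by
  have hp0 : 0 < p := lt_of_lt_of_le one_pos hp
  set D : ℝ := (Finset.range σ.length).inf' (Finset.nonempty_range_iff.mpr (by omega)) (fun i =>
    dist (σ.getD i default) (τ.getD j default)) with hD
  have hDle : D ≤ dtw p σ τ := by
    apply le_csInf (dtwSet_nonempty p σ τ h1 (by omega))
    rintro b ⟨W, hW, rfl⟩
    obtain ⟨k, hk, hsnd, hfst⟩ := Warp.exists_pair hW hj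
    have hi : (W.getD k (0,0)).1 < σ.length := by omega
    have h1' : D ≤ dist (σ.getD (W.getD k (0,0)).1 default) (τ.getD j default) :=
      Finset.inf'_le _ (Finset.mem_range.mpr hi)
    calc D ≤ dist (σ.getD (W.getD k (0,0)).1 default) (τ.getD j default) := h1'
      _ = (dist (σ.getD (W.getD k (0,0)).1 default) (τ.getD (W.getD k (0,0)).2 default) ^ p)
            ^ (1/p) := by rw [hsnd, one_div, Real.rpow_rpow_inv dist_nonneg (ne_of_gt hp0)]
      _ ≤ warpCost p σ τ W ^ (1/p) :=
          Real.rpow_le_rpow (Real.rpow_nonneg dist_nonneg p)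
            (single_le_warpCost p σ τ hk) (by positivity)
  obtain ⟨i, hi, hieq⟩ := Finset.exists_mem_eq_inf' (s := Finset.range σ.length)
    (Finset.nonempty_range_iff.mpr (by omega)) (fun i => dist (σ.getD i default) (τ.getD j default))
  refine ⟨i, Finset.mem_range.mp hi, ?_⟩
  have : dist (σ.getD i default) (τ.getD j default) = D := (hD.trans hieq).symm
  linarith [hDle.trans hR]

end DTW

section Shift

variable {X : Type*} [MetricSpace X] [Inhabited X]

/-- Moving each vertex of `c` by at most `δ` increases the DTW distance by at most `M^{1/p}·δ`,
where `M` bounds the total complexity. -/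
lemma dtw_map_le (p : ℝ) (hp : 1 ≤ p) (f : X → X) (c τ : List X)
    (h1 : 1 ≤ c.length) (h2 : 1 ≤ τ.length) (δ : ℝ) (hδ : 0 ≤ δ)
    (hf : ∀ x ∈ c, dist (f x) x ≤ δ) (M : ℕ) (hM : c.length + τ.length - 1 ≤ M) :
    dtw p (c.map f) τ ≤ dtw p c τ + (M : ℝ) ^ (1 / p) * δ := by
  have hp0 : 0 < p := lt_of_lt_of_le one_pos hp
  have hlenmap : (c.map f).length = c.length := List.length_map f
  -- pointwise bound
  have hpt : ∀ i j : ℕ, dist ((c.map f).getD i default) (τ.getD j default) ≤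
      dist (c.getD i default) (τ.getD j default) + δ := by
    intro i j
    rcases Nat.lt_or_ge i c.length with hi | hi
    · have hy : c.getD i default = c.get ⟨i, hi⟩ := by
        rw [List.getD_eq_getElem c default hi, List.get_eq_getElem]
      have e1 : (c.map f).getD i default = f (c.get ⟨i, hi⟩) := by
        rw [List.getD_eq_getElem _ _ (by simpa using hi), List.getElem_map, List.get_eq_getElem]
      have hmem : c.get ⟨i, hi⟩ ∈ c := by
        rw [List.get_eq_getElem]; exact List.getElem_mem hi
      have h3 := hf _ hmem
      rw [e1, hy]
      calc dist (f (c.get ⟨i, hi⟩)) (τ.getD j default)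
          ≤ dist (f (c.get ⟨i, hi⟩)) (c.get ⟨i, hi⟩) +
              dist (c.get ⟨i, hi⟩) (τ.getD j default) := dist_triangle _ _ _
        _ ≤ dist (c.get ⟨i, hi⟩) (τ.getD j default) + δ := by linarith
    · rw [List.getD_eq_default (c.map f) default (by simpa using hi),
        List.getD_eq_default c default hi]
      linarith
  set K : ℝ := (M : ℝ) ^ (1 / p) * δ with hK
  have hbb' : BddBelow {c' : ℝ | ∃ W, IsWarping (c.map f).length τ.length W ∧
      c' = warpCost p (c.map f) τ W ^ (1/p)} := by
    refine ⟨0, ?_⟩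
    rintro x ⟨W', -, rfl⟩
    exact Real.rpow_nonneg (warpCost_nonneg _ _ _ _) _
  have key : ∀ b ∈ {c' : ℝ | ∃ W, IsWarping c.length τ.length W ∧
      c' = warpCost p c τ W ^ (1/p)}, dtw p (c.map f) τ ≤ b + K := by
    rintro b ⟨W, hW, rfl⟩
    have hW' : IsWarping (c.map f).length τ.length W := by rw [hlenmap]; exact hW
    have h3 : dtw p (c.map f) τ ≤ warpCost p (c.map f) τ W ^ (1/p) :=
      csInf_le hbb' ⟨W, hW', rfl⟩
    refine h3.trans ?_
    have hlenW : W.length ≤ M := le_trans (Warp.length_le hW h1 h2) hM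
    calc warpCost p (c.map f) τ W ^ (1/p)
        ≤ (∑ k : Fin W.length,
            (dist (c.getD (W.get k).1 default) (τ.getD (W.get k).2 default) + δ) ^ p)
              ^ (1/p) := by
          apply Real.rpow_le_rpow (warpCost_nonneg _ _ _ _) ?_ (by positivity)
          rw [warpCost_eq_sum]
          apply Finset.sum_le_sum
          intro k _
          exact Real.rpow_le_rpow dist_nonneg (hpt _ _) (le_of_lt hp0)
      _ ≤ (∑ k : Fin W.length,
            dist (c.getD (W.get k).1 default) (τ.getD (W.get k).2 default) ^ p) ^ (1/p)
          + (∑ _k : Fin W.length, δ ^ p) ^ (1/p) :=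
          Real.Lp_add_le_of_nonneg Finset.univ hp (fun i _ => dist_nonneg) (fun i _ => hδ)
      _ = warpCost p c τ W ^ (1/p) + ((W.length : ℝ)) ^ (1/p) * δ := by
          rw [← warpCost_eq_sum]
          congr 1
          rw [Finset.sum_const, Finset.card_univ, Fintype.card_fin, nsmul_eq_mul,
            Real.mul_rpow (Nat.cast_nonneg _) (Real.rpow_nonneg hδ _), one_div,
            Real.rpow_rpow_inv hδ (ne_of_gt hp0)]
      _ ≤ warpCost p c τ W ^ (1/p) + K := by
          have h4 : ((W.length : ℝ)) ^ (1/p) ≤ (M : ℝ) ^ (1/p) :=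
            Real.rpow_le_rpow (Nat.cast_nonneg _) (by exact_mod_cast hlenW) (by positivity)
          have h5 : ((W.length : ℝ)) ^ (1/p) * δ ≤ K := by
            rw [hK]; exact mul_le_mul_of_nonneg_right h4 hδ
          linarith
  have hfinal : dtw p (c.map f) τ - K ≤ dtw p c τ :=
    le_csInf (dtwSet_nonempty p c τ h1 h2) fun b hb => by linarith [key b hb]
  linarith

end Shift



lemma dist_gridPt_le {d : ℕ} {γ : ℝ} (hγ : 0 < γ) (x : EuclideanSpace ℝ (Fin d)) :
    dist (gridPt d γ x) x ≤ γ * Real.sqrt d := by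
  rw [EuclideanSpace.dist_eq]
  have hcoord : ∀ i : Fin d, dist (gridPt d γ x i) (x i) ^ 2 ≤ γ ^ 2 := by
    intro i
    have h1 : |(⌊x i / γ⌋ : ℝ) - x i / γ| ≤ 1 := by
      rw [abs_le]
      constructor
      · linarith [Int.lt_floor_add_one (x i / γ)]
      · linarith [Int.floor_le (x i / γ)]
    have h2 : dist (gridPt d γ x i) (x i) ≤ γ := by
      rw [Real.dist_eq, gridPt]
      have : (⌊x i / γ⌋ : ℝ) * γ - x i = ((⌊x i / γ⌋ : ℝ) - x i / γ) * γ := by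
        field_simp
      rw [this, abs_mul, abs_of_pos hγ]
      nlinarith [abs_nonneg ((⌊x i / γ⌋ : ℝ) - x i / γ)]
    nlinarith [dist_nonneg (x := gridPt d γ x i) (y := x i)]
  calc Real.sqrt (∑ i, dist (gridPt d γ x i) (x i) ^ 2)
      ≤ Real.sqrt (∑ _i : Fin d, γ ^ 2) :=
        Real.sqrt_le_sqrt (Finset.sum_le_sum fun i _ => hcoord i)
    _ = γ * Real.sqrt d := by
        rw [Finset.sum_const, Finset.card_univ, Fintype.card_fin, nsmul_eq_mul,
          Real.sqrt_mul (Nat.cast_nonneg _), Real.sqrt_sq (le_of_lt hγ)]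
        ring

/-- **The candidate grid contains a `(1+ε)`-approximate median**
(Lemma `lemma:correctnessapproxscheme` ii): under the same assumptions as part i), there is
a point sequence `c'` of complexity at most `ℓ` with all vertices in
`𝔾(ℬ(τᵢ,4r*), γ*)` such that `cost_p^1(T,c') ≤ (1+ε)·cost_p^1(T,c)`. -/
theorem candidate_grid_contains_approx_median (d : ℕ) (hd : 1 ≤ d)
    (T : Finset (List (EuclideanSpace ℝ (Fin d)))) (n m ℓ : ℕ)
    (hn : T.card = n) (hn0 : 0 < n)
    (hm : ∀ τ ∈ T, 2 ≤ τ.length ∧ τ.length ≤ m)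
    (hℓ2 : 2 ≤ ℓ) (hℓm : ℓ ≤ m)
    (p : ℝ) (hp : 1 ≤ p) (ε : ℝ) (hε : 0 < ε)
    (c : List (EuclideanSpace ℝ (Fin d))) (hc : SeqLE ℓ c)
    (hcopt : ∀ c' : List (EuclideanSpace ℝ (Fin d)), SeqLE ℓ c' →
      dtwCost p 1 T c ≤ dtwCost p 1 T c')
    (rs : ℝ) (hrs : 0 < rs)
    (hr1 : (n : ℝ) * rs ≤ dtwCost p 1 T c) (hr2 : dtwCost p 1 T c ≤ 2 * n * rs)
    (τi : List (EuclideanSpace ℝ (Fin d))) (hτi : τi ∈ T)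
    (hclose : dtw p τi c ≤ (2 / (n : ℝ)) * dtwCost p 1 T c) :
    ∃ c' : List (EuclideanSpace ℝ (Fin d)), SeqLE ℓ c' ∧
      (∀ v ∈ c', v ∈ gridOf d (⋃ x ∈ {x | x ∈ τi}, Metric.closedBall x (4 * rs))
        (ε * rs / ((2 * (m : ℝ)) ^ (1 / p) * Real.sqrt d))) ∧
      dtwCost p 1 T c' ≤ (1 + ε) * dtwCost p 1 T c := by
  have hm2 : 2 ≤ m := le_trans hℓ2 hℓm
  have hp0 : 0 < p := lt_of_lt_of_le one_pos hp
  have hd0 : (0:ℝ) < Real.sqrt d := Real.sqrt_pos.mpr (by exact_mod_cast hd)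
  have hm0 : (2:ℝ) ≤ (m:ℝ) := by exact_mod_cast hm2
  have h2m : (0:ℝ) < 2 * (m:ℝ) := by linarith
  set D : ℝ := (2 * (m:ℝ)) ^ (1/p) * Real.sqrt d with hDdef
  have hD : 0 < D := mul_pos (Real.rpow_pos_of_pos h2m _) hd0
  set γ : ℝ := ε * rs / D with hγdef
  have hγ : 0 < γ := div_pos (mul_pos hε hrs) hD
  set c' := c.map (gridPt d γ) with hc'def
  have hlen : c'.length = c.length := List.length_map _
  obtain ⟨hc2, hcℓ⟩ := hc
  have hn0' : (0:ℝ) < n := by exact_mod_cast hn0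
  refine ⟨c', ⟨by rw [hlen]; exact hc2, by rw [hlen]; exact hcℓ⟩, ?_, ?_⟩
  · -- all vertices lie in the grid
    intro v hv
    obtain ⟨x, hx, rfl⟩ := List.mem_map.mp hv
    have hdtwle : dtw p τi c ≤ 4 * rs := by
      have h1 : (2 / (n:ℝ)) * dtwCost p 1 T c ≤ (2 / n) * (2 * n * rs) :=
        mul_le_mul_of_nonneg_left hr2 (by positivity)
      have heq : (2 / (n:ℝ)) * (2 * n * rs) = 4 * rs := by
        field_simp
        ring
      linarith [hclose]
    obtain ⟨j, hj, hxj⟩ := List.mem_iff_getElem.mp hx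
    have hxj' : c.getD j default = x := by
      rw [List.getD_eq_getElem c default hj]; exact hxj
    have hτlen : 1 ≤ τi.length := by have := hm τi hτi; omega
    obtain ⟨i, hi, hdist⟩ := exists_vertex_close p hp τi c hτlen hj hdtwle
    refine ⟨x, ?_, rfl⟩
    refine Set.mem_biUnion (show τi.getD i default ∈ {y | y ∈ τi} from ?_) ?_
    · rw [List.getD_eq_getElem τi default hi]
      exact List.getElem_mem hi
    · rw [Metric.mem_closedBall, ← hxj', dist_comm]
      exact hdist
  · -- cost bound
    have hperτ : ∀ τ ∈ T, dtw p c' τ ≤ dtw p c τ + ε * rs := by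
      intro τ hτ
      have hτm := hm τ hτ
      have h := dtw_map_le p hp (gridPt d γ) c τ (by omega) (by omega) (γ * Real.sqrt d)
        (by positivity) (fun x _ => dist_gridPt_le hγ x) (2 * m) (by omega)
      have hval : ((2 * m : ℕ) : ℝ) ^ (1/p) * (γ * Real.sqrt d) = ε * rs := by
        have hne1 : ((2 * (m:ℝ)) ^ (1/p)) ≠ 0 := ne_of_gt (Real.rpow_pos_of_pos h2m _)
        have hne2 : Real.sqrt d ≠ 0 := ne_of_gt hd0
        push_cast
        rw [hγdef, hDdef]
        field_simp
      rw [hval] at h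
      exact h
    calc dtwCost p 1 T c' = ∑ τ ∈ T, dtw p c' τ := by
          rw [dtwCost]
          exact Finset.sum_congr rfl fun τ _ => Real.rpow_one _
      _ ≤ ∑ τ ∈ T, (dtw p c τ + ε * rs) := Finset.sum_le_sum hperτ
      _ = dtwCost p 1 T c + (n : ℝ) * (ε * rs) := by
          rw [Finset.sum_add_distrib, Finset.sum_const, hn, nsmul_eq_mul]
          congr 1
          rw [dtwCost]
          exact Finset.sum_congr rfl fun τ _ => (Real.rpow_one _).symm
      _ ≤ (1 + ε) * dtwCost p 1 T c := by
          have h1 : ε * ((n:ℝ) * rs) ≤ ε * dtwCost p 1 T c :=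
            mul_le_mul_of_nonneg_left hr1 hε.le
          nlinarith [h1]
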